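/- Explicit regulator constants for permutation modules: if ρ = 𝒦[G/D] with the standard pairing making the cosets of D an orthonormal basis, then for any subgroup H ≤ G, det((1/|H|)⟨,⟩ | ρ^H) = ∏_{w ∈ H\G/D} 1/|H ∩ D^w|, where D^w = wDw⁻¹ and the product is over double-coset representatives. -/

import Mathlib

open scoped BigOperators

/-- The subspace of H-invariant functions in the permutation module K[G/D] of
functions on the coset space G/D (with G acting by (g . f)(x) = f (g^-1 . x)). -/
def permInvariants (K : Type*) [Field K] {G : Type*} [Group G] (D H : Subgroup G) :
    Submodule K ((G ⧸ D) → K) where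
  carrier := {f | ∀ h ∈ H, ∀ x : G ⧸ D, f (h • x) = f x}
  zero_mem' := fun _ _ _ => rfl
  add_mem' := by
    intro f f' hf hf' h hh x
    simp [hf h hh x, hf' h hh x]
  smul_mem' := by
    intro c f hf h hh x
    simp [hf h hh x]

section Aux

variable {K : Type*} [Field K] {G : Type*} [Group G] {D H : Subgroup G}

open Classical in
/-- Indicator function of the `H`-orbit of the coset `w D` in `G ⧸ D`. -/
noncomputable def orbFun (K : Type*) [Field K] {G : Type*} [Group G] (D H : Subgroup G)
    (w : G) : (G ⧸ D) → K :=
  fun x => if ∃ h ∈ H, x = h • (QuotientGroup.mk w : G ⧸ D) then 1 else 0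

lemma orbFun_cond_iff {w g : G} :
    (∃ h ∈ H, (QuotientGroup.mk g : G ⧸ D) = h • (QuotientGroup.mk w : G ⧸ D)) ↔
      ∃ h ∈ H, ∃ d ∈ D, g = h * w * d := by
  constructor
  · rintro ⟨h, hH, hg⟩
    rw [MulAction.Quotient.smul_mk, QuotientGroup.eq] at hg
    refine ⟨h, hH, (h * w)⁻¹ * g, ?_, by group⟩
    have := inv_mem hg
    simpa [mul_inv_rev, smul_eq_mul, mul_assoc] using this
  · rintro ⟨h, hH, d, hd, rfl⟩
    refine ⟨h, hH, ?_⟩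
    rw [MulAction.Quotient.smul_mk, QuotientGroup.eq]
    convert inv_mem hd using 1
    simp only [smul_eq_mul]
    group

lemma orbFun_mem (w : G) : orbFun K D H w ∈ permInvariants K D H := by
  intro h0 hh0 x
  have hiff : (∃ h ∈ H, h0 • x = h • (QuotientGroup.mk w : G ⧸ D)) ↔
      (∃ h ∈ H, x = h • (QuotientGroup.mk w : G ⧸ D)) := by
    constructor
    · rintro ⟨h, hH, hx⟩
      exact ⟨h0⁻¹ * h, mul_mem (inv_mem hh0) hH,
        by rw [mul_smul, ← hx, inv_smul_smul]⟩
    · rintro ⟨h, hH, rfl⟩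
      exact ⟨h0 * h, mul_mem hh0 hH, (mul_smul _ _ _).symm⟩
  classical
  simp only [orbFun]
  rw [if_congr hiff rfl rfl]

/-- The bilinear form `(1/|H|) ⟨,⟩` on the invariants. -/
noncomputable def permB (K : Type*) [Field K] {G : Type*} [Group G] (D H : Subgroup G)
    [Fintype (G ⧸ D)] : LinearMap.BilinForm K (permInvariants K D H) :=
  LinearMap.mk₂ K
    (fun f g => (Nat.card H : K)⁻¹ *
      ∑ x : G ⧸ D, (f : (G ⧸ D) → K) x * (g : (G ⧸ D) → K) x)
    (by
      intro f f' g
      simp only [Submodule.coe_add, Pi.add_apply, add_mul, Finset.sum_add_distrib]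
      try ring)
    (by
      intro c f g
      simp only [SetLike.val_smul, Pi.smul_apply, smul_eq_mul]
      rw [show ∑ x : G ⧸ D, (c * (f : (G ⧸ D) → K) x) * (g : (G ⧸ D) → K) x
          = c * ∑ x : G ⧸ D, (f : (G ⧸ D) → K) x * (g : (G ⧸ D) → K) x by
        rw [Finset.mul_sum]; exact Finset.sum_congr rfl fun _ _ => by ring]
      ring)
    (by
      intro f g g'
      simp only [Submodule.coe_add, Pi.add_apply, mul_add, Finset.sum_add_distrib]
      try ring)
    (by
      intro c f g
      simp only [SetLike.val_smul, Pi.smul_apply, smul_eq_mul]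
      rw [show ∑ x : G ⧸ D, (f : (G ⧸ D) → K) x * (c * (g : (G ⧸ D) → K) x)
          = c * ∑ x : G ⧸ D, (f : (G ⧸ D) → K) x * (g : (G ⧸ D) → K) x by
        rw [Finset.mul_sum]; exact Finset.sum_congr rfl fun _ _ => by ring]
      ring)

lemma permB_apply [Fintype (G ⧸ D)] (f g : permInvariants K D H) :
    permB K D H f g = (Nat.card H : K)⁻¹ *
      ∑ x : G ⧸ D, (f : (G ⧸ D) → K) x * (g : (G ⧸ D) → K) x := rfl

end Aux

section Count

variable {K : Type*} [Field K] [CharZero K] {G : Type*} [Group G] [Fintype G]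
  (D H : Subgroup G) [Fintype (G ⧸ D)]

set_option linter.unusedSectionVars false

lemma stab_mem_iff (w h : G) :
    (h • (QuotientGroup.mk w : G ⧸ D) = QuotientGroup.mk w) ↔
      h ∈ D.map (MulAut.conj w).toMonoidHom := by
  rw [MulAction.Quotient.smul_mk, QuotientGroup.eq]
  constructor
  · intro hd
    refine ⟨((h • w)⁻¹ * w)⁻¹, inv_mem hd, ?_⟩
    simp only [MulEquiv.coe_toMonoidHom, MulAut.conj_apply, smul_eq_mul]
    group
  · rintro ⟨d, hd, rfl⟩
    convert inv_mem hd using 1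
    simp only [MulEquiv.coe_toMonoidHom, MulAut.conj_apply, smul_eq_mul]
    group

lemma stab_card (w : G) :
    Nat.card (MulAction.stabilizer H (QuotientGroup.mk w : G ⧸ D)) =
      Nat.card (H ⊓ D.map (MulAut.conj w).toMonoidHom : Subgroup G) := by
  apply Nat.card_congr
  exact
    { toFun := fun s => ⟨((s : H) : G), Subgroup.mem_inf.2 ⟨(s : H).2,
        (stab_mem_iff D w _).1 (by
          have h2 := s.2
          rw [MulAction.mem_stabilizer_iff] at h2; exact h2)⟩⟩
      invFun := fun u => ⟨⟨(u : G), (Subgroup.mem_inf.1 u.2).1⟩, by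
        rw [MulAction.mem_stabilizer_iff]
        exact (stab_mem_iff D w (u : G)).2 (Subgroup.mem_inf.1 u.2).2⟩
      left_inv := fun s => Subtype.ext (Subtype.ext rfl)
      right_inv := fun u => Subtype.ext rfl }

lemma orb_sum (w : G) :
    ∑ x : G ⧸ D, orbFun K D H w x =
      (Nat.card (MulAction.orbit H (QuotientGroup.mk w : G ⧸ D)) : K) := by
  have hset : MulAction.orbit H (QuotientGroup.mk w : G ⧸ D) =
      {x | ∃ h ∈ H, x = h • (QuotientGroup.mk w : G ⧸ D)} := by
    ext x
    rw [MulAction.mem_orbit_iff]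
    constructor
    · rintro ⟨h, rfl⟩
      exact ⟨(h : G), h.2, rfl⟩
    · rintro ⟨h, hH, rfl⟩
      exact ⟨⟨h, hH⟩, Subgroup.smul_def _ _⟩
  rw [hset]
  simp only [orbFun]
  simp only [Finset.sum_boole]
  congr 1
  rw [Nat.card_coe_set_eq, ← Set.ncard_coe_finset]
  congr 1
  ext x
  simp only [Finset.mem_coe, Finset.mem_filter, Finset.mem_univ, true_and]
  simp


variable {K : Type*} [Field K] [CharZero K] {G : Type*} [Group G] [Fintype G]
  {D H : Subgroup G} [Fintype (G ⧸ D)]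

set_option maxHeartbeats 1000000 in
lemma permB_diag (w : G) :
    permB K D H ⟨orbFun K D H w, orbFun_mem w⟩ ⟨orbFun K D H w, orbFun_mem w⟩ =
      ((Nat.card (H ⊓ D.map (MulAut.conj w).toMonoidHom : Subgroup G) : K))⁻¹ := by
  rw [permB_apply]
  have hsq : ∀ x : G ⧸ D, orbFun K D H w x * orbFun K D H w x = orbFun K D H w x := by
    intro x; simp only [orbFun]; split <;> simp
  show (Nat.card H : K)⁻¹ * ∑ x : G ⧸ D, orbFun K D H w x * orbFun K D H w x = _
  rw [show ∑ x : G ⧸ D, orbFun K D H w x * orbFun K D H w x = ∑ x : G ⧸ D, orbFun K D H w x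
    from Finset.sum_congr rfl fun x _ => hsq x, orb_sum]
  letI : Fintype H := Fintype.ofFinite _
  letI : Fintype (MulAction.orbit H (QuotientGroup.mk w : G ⧸ D)) := Fintype.ofFinite _
  letI : Fintype (MulAction.stabilizer H (QuotientGroup.mk w : G ⧸ D)) := Fintype.ofFinite _
  have hos := MulAction.card_orbit_mul_card_stabilizer_eq_card_group (G := H)
    (QuotientGroup.mk w : G ⧸ D)
  rw [← Nat.card_eq_fintype_card, ← Nat.card_eq_fintype_card, ← Nat.card_eq_fintype_card,
    stab_card D H] at hos
  have hn : (0 : ℕ) < Nat.card (MulAction.orbit H (QuotientGroup.mk w : G ⧸ D)) := by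
    have : Nonempty (MulAction.orbit H (QuotientGroup.mk w : G ⧸ D)) :=
      (MulAction.nonempty_orbit _).to_subtype
    exact Nat.card_pos
  have hs : (0 : ℕ) < Nat.card (H ⊓ D.map (MulAut.conj w).toMonoidHom : Subgroup G) :=
    Nat.card_pos
  have hn' : ((Nat.card (MulAction.orbit H (QuotientGroup.mk w : G ⧸ D))) : K) ≠ 0 := by
    exact_mod_cast hn.ne'
  have hs' : ((Nat.card (H ⊓ D.map (MulAut.conj w).toMonoidHom : Subgroup G)) : K) ≠ 0 := by
    exact_mod_cast hs.ne'
  rw [← hos, Nat.cast_mul, mul_inv, mul_right_comm, inv_mul_cancel₀ hn', one_mul]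

lemma permB_offdiag {w w' : G}
    (hdis : ∀ g : G, (∃ h ∈ H, ∃ d ∈ D, g = h * w * d) →
      (∃ h ∈ H, ∃ d ∈ D, g = h * w' * d) → False) :
    permB K D H ⟨orbFun K D H w, orbFun_mem w⟩ ⟨orbFun K D H w', orbFun_mem w'⟩ = 0 := by
  rw [permB_apply]
  show (Nat.card H : K)⁻¹ * ∑ x : G ⧸ D, orbFun K D H w x * orbFun K D H w' x = 0
  have : ∑ x : G ⧸ D, orbFun K D H w x * orbFun K D H w' x = 0 := by
    apply Finset.sum_eq_zero
    intro x _
    obtain ⟨g, rfl⟩ := QuotientGroup.mk_surjective x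
    simp only [orbFun]
    split_ifs with h1 h2
    · exact ((hdis g (orbFun_cond_iff.1 h1) (orbFun_cond_iff.1 h2))).elim
    · simp
    · simp
    · simp
  rw [this, mul_zero]

end Count

theorem permutation_module_regulator_determinant
    {K : Type*} [Field K] [CharZero K]
    {G : Type*} [Group G] [Fintype G] (D H : Subgroup G)
    [Fintype (G ⧸ D)]
    (T : Finset G)
    (hT : ∀ g : G, ∃! x, x ∈ T ∧ ∃ h ∈ H, ∃ d ∈ D, g = h * x * d)
    {κ : Type*} [Fintype κ] [DecidableEq κ]
    (b : Module.Basis κ K (permInvariants K D H)) :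
    ∃ c : K, c ≠ 0 ∧
      Matrix.det (Matrix.of fun j k : κ =>
          (Nat.card H : K)⁻¹ *
            ∑ x : G ⧸ D, ((b j : (G ⧸ D) → K) x * (b k : (G ⧸ D) → K) x))
        = c ^ 2 * ∏ w ∈ T,
            ((Nat.card (H ⊓ D.map (MulAut.conj w).toMonoidHom : Subgroup G) : K))⁻¹ := by
  classical
  -- the family of orbit indicator functions
  set vfam : T → permInvariants K D H :=
    fun w => ⟨orbFun K D H (w : G), orbFun_mem (w : G)⟩ with hvfam
  -- linear independence
  have hli : LinearIndependent K vfam := by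
    rw [linearIndependent_iff']
    intro s c hsum i hi
    have hc := congrFun (congrArg Subtype.val hsum) (QuotientGroup.mk (i : G))
    simp only [AddSubmonoidClass.coe_finset_sum, SetLike.val_smul, Finset.sum_apply,
      Pi.smul_apply, smul_eq_mul, Submodule.coe_zero, Pi.zero_apply] at hc
    have heach : ∀ j ∈ s, c j * (vfam j : (G ⧸ D) → K) (QuotientGroup.mk (i : G))
        = if i = j then c j else 0 := by
      intro j _
      rw [hvfam]
      show c j * orbFun K D H (j : G) (QuotientGroup.mk (i : G)) = _
      simp only [orbFun]
      by_cases h : i = j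
      · subst h
        rw [if_pos ⟨1, one_mem _, by rw [one_smul]⟩, if_pos rfl, mul_one]
      · rw [if_neg, if_neg h, mul_zero]
        intro hcond
        obtain ⟨y, -, hy⟩ := hT (i : G)
        have h1 := hy (j : G) ⟨j.2, orbFun_cond_iff.1 hcond⟩
        have h2 := hy (i : G) ⟨i.2, ⟨1, one_mem _, 1, one_mem _, by group⟩⟩
        exact h (Subtype.ext (h2.trans h1.symm))
    rw [Finset.sum_congr rfl heach, Finset.sum_ite_eq s i c, if_pos hi] at hc
    simpa using hc
  -- spanning
  have hsp : ⊤ ≤ Submodule.span K (Set.range vfam) := by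
    intro f _
    have hf : f = ∑ w : T, ((f : (G ⧸ D) → K) (QuotientGroup.mk (w : G))) • vfam w := by
      apply Subtype.ext
      funext x
      obtain ⟨g, rfl⟩ := QuotientGroup.mk_surjective x
      obtain ⟨w0, ⟨hw0T, hw0P⟩, hw0u⟩ := hT g
      rw [AddSubmonoidClass.coe_finset_sum, Finset.sum_apply]
      simp only [SetLike.val_smul, Pi.smul_apply, smul_eq_mul]
      rw [Finset.sum_eq_single (⟨w0, hw0T⟩ : T)]
      · show (f : (G ⧸ D) → K) (QuotientGroup.mk g)
          = (f : (G ⧸ D) → K) (QuotientGroup.mk w0) * orbFun K D H w0 (QuotientGroup.mk g)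
        obtain ⟨h1, hh1, e1⟩ := (orbFun_cond_iff (D := D) (H := H)).2 hw0P
        simp only [orbFun]
        rw [if_pos (orbFun_cond_iff.2 hw0P), mul_one, e1, f.2 h1 hh1]
      · intro w _ hw
        show _ * orbFun K D H (w : G) (QuotientGroup.mk g) = 0
        simp only [orbFun]
        rw [if_neg, mul_zero]
        intro hcond
        have h1 := hw0u (w : G) ⟨w.2, orbFun_cond_iff.1 hcond⟩
        exact hw (Subtype.ext h1)
      · intro hmem
        exact absurd (Finset.mem_univ _) hmem
    rw [hf]
    exact Submodule.sum_mem _ fun w _ =>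
      Submodule.smul_mem _ _ (Submodule.subset_span ⟨w, rfl⟩)
  let v : Module.Basis T K (permInvariants K D H) := Module.Basis.mk hli hsp
  let e : κ ≃ T := b.indexEquiv v
  let v' : Module.Basis κ K (permInvariants K D H) := v.reindex e.symm
  have hv' : ∀ j : κ, v' j = vfam (e j) := by
    intro j
    rw [Module.Basis.reindex_apply, Equiv.symm_symm, Module.Basis.mk_apply]
  -- the Gram matrix of b is the statement's matrix
  have hM : (Matrix.of fun j k : κ =>
        (Nat.card H : K)⁻¹ *
          ∑ x : G ⧸ D, ((b j : (G ⧸ D) → K) x * (b k : (G ⧸ D) → K) x))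
      = LinearMap.BilinForm.toMatrix b (permB K D H) := by
    ext j k
    rw [BilinForm.toMatrix_apply, permB_apply]
    rfl
  -- the Gram matrix of v' is diagonal
  have hdiag : LinearMap.BilinForm.toMatrix v' (permB K D H) =
      Matrix.diagonal (fun j : κ =>
        ((Nat.card (H ⊓ D.map (MulAut.conj ((e j : T) : G)).toMonoidHom : Subgroup G) : K))⁻¹) := by
    ext j k
    rw [BilinForm.toMatrix_apply, hv' j, hv' k, hvfam]
    by_cases h : j = k
    · subst h
      rw [Matrix.diagonal_apply_eq]
      exact permB_diag _
    · rw [Matrix.diagonal_apply_ne _ h]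
      apply permB_offdiag
      intro g hgw hgw'
      obtain ⟨y, -, hy⟩ := hT g
      have h1 := hy _ ⟨(e j).2, hgw⟩
      have h2 := hy _ ⟨(e k).2, hgw'⟩
      exact h (e.injective (Subtype.ext (h1.trans h2.symm)))
  refine ⟨(v'.toMatrix b).det, ?_, ?_⟩
  · intro h0
    have h1 := Module.Basis.toMatrix_mul_toMatrix_flip v' b
    have h2 := congrArg Matrix.det h1
    rw [Matrix.det_mul, h0, zero_mul, Matrix.det_one] at h2
    exact zero_ne_one h2
  · rw [hM, ← BilinForm.toMatrix_mul_basis_toMatrix v' b (permB K D H),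
      Matrix.det_mul, Matrix.det_mul, Matrix.det_transpose, hdiag, Matrix.det_diagonal]
    rw [show ∏ j : κ, ((Nat.card
          (H ⊓ D.map (MulAut.conj ((e j : T) : G)).toMonoidHom : Subgroup G) : K))⁻¹
        = ∏ w ∈ T, ((Nat.card
          (H ⊓ D.map (MulAut.conj w).toMonoidHom : Subgroup G) : K))⁻¹ from by
      rw [← Finset.prod_coe_sort T]
      exact Equiv.prod_comp e (fun w : T => ((Nat.card
        (H ⊓ D.map (MulAut.conj (w : G)).toMonoidHom : Subgroup G) : K))⁻¹)]
    ring
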